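/- For every non-negative integer n and ℓ ≥ 0, the number of hyperbinary representations of n having exactly ℓ digits equal to 1 equals the coefficient of t^ℓ in the Stern polynomial B_{n+1}(t). -/

import Mathlib

open Polynomial in
/-- The Stern polynomial: `B 0 = 0`, `B 1 = 1`, `B (2n) = t * B n`, `B (2n+1) = B n + B (n+1)`. -/
noncomputable def sternP : ℕ → Polynomial ℕ
  | 0 => 0
  | 1 => 1
  | n + 2 =>
    if (n + 2) % 2 = 0 then X * sternP (n / 2 + 1)
    else sternP (n / 2 + 1) + sternP (n / 2 + 2)
decreasing_by all_goals omega

/-- The digits of a BSD representation lie in {-1, 0, 1}. -/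
def IsBSDDigits {i : ℕ} (b : Fin i → ℤ) : Prop := ∀ j, b j ∈ ({-1, 0, 1} : Set ℤ)

/-- The value represented by the digit string `b` (least significant digit `b 0`). -/
def bsdVal {i : ℕ} (b : Fin i → ℤ) : ℤ := ∑ j : Fin i, b j * 2 ^ (j : ℕ)

/-- `b` is a (not necessarily reduced) non-adjacent form digit string of length `k`:
digits in {-1,0,1}, no two adjacent digits both nonzero, and nonzero leading digit
(when `k > 0`). -/
def IsReducedNAF {k : ℕ} (b : Fin k → ℤ) : Prop :=
  IsBSDDigits b ∧
  (∀ j : Fin k, ∀ h : (j : ℕ) + 1 < k, b j = 0 ∨ b ⟨(j : ℕ) + 1, h⟩ = 0) ∧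
  (∀ h : 0 < k, b ⟨k - 1, Nat.sub_lt h one_pos⟩ ≠ 0)

/-- `m` has a reduced NAF representation of bitlength `k`. -/
def HasNAFLen (m : ℤ) (k : ℕ) : Prop :=
  ∃ b : Fin k → ℤ, IsReducedNAF b ∧ bsdVal b = m

/-- `I k`: the set of positive integers of NAF-bitlength `k`. -/
def NAFInterval (k : ℕ) : Set ℕ := {n : ℕ | HasNAFLen (n : ℤ) k}

/-- `a k = min I k`: `a 1 = 1`, `a 2 = 2`, `a k = 2^(k-2) + a (k-2)`. -/
def aseq : ℕ → ℕ
  | 0 => 0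
  | 1 => 1
  | 2 => 2
  | k + 3 => 2 ^ (k + 1) + aseq (k + 1)

/-- The NAF-bitlength of `n`. -/
noncomputable def nafLen (n : ℕ) : ℕ := sInf {k : ℕ | HasNAFLen (n : ℤ) k}

/-- The minimal Hamming weight of a BSD representation of `n` of length
equal to its NAF-bitlength. -/
noncomputable def minWeight (n : ℕ) : ℕ :=
  sInf {w : ℕ | ∃ b : Fin (nafLen n) → ℤ,
    IsBSDDigits b ∧ bsdVal b = (n : ℤ) ∧ {j | b j ≠ 0}.ncard = w}

/-- `Z n`: the number of zeros in an optimal (minimal-weight) BSD representation of `n`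
of length equal to its NAF-bitlength. -/
noncomputable def Zfun (n : ℕ) : ℕ := nafLen n - minWeight n

/-- `M n`: the number of optimal (minimal-weight) BSD representations of `n`
of length equal to its NAF-bitlength. -/
noncomputable def Mfun (n : ℕ) : ℕ :=
  {b : Fin (nafLen n) → ℤ |
    IsBSDDigits b ∧ bsdVal b = (n : ℤ) ∧ {j | b j ≠ 0}.ncard = minWeight n}.ncard


open Polynomial in
lemma sternP_even (m : ℕ) : sternP (2*m+2) = X * sternP (m+1) := by
  rw [show 2*m+2 = (2*m)+2 from rfl, sternP]
  have h1 : (2*m+2) % 2 = 0 := by omega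
  have h2 : (2*m)/2 = m := by omega
  simp [h1, h2]

lemma sternP_odd (m : ℕ) : sternP (2*m+3) = sternP (m+1) + sternP (m+2) := by
  rw [show 2*m+3 = (2*m+1)+2 from rfl, sternP]
  have h1 : (2*m+1+2) % 2 = 1 := by omega
  have h2 : (2*m+1)/2 = m := by omega
  simp [h1, h2]

lemma sternP_one : sternP 1 = 1 := by rw [sternP]

open Polynomial

namespace HB

def val (h : ℕ →₀ ℕ) : ℕ := h.sum fun j a => a * 2 ^ j

def succEmb : ℕ ↪ ℕ := ⟨Nat.succ, Nat.succ_injective⟩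

noncomputable def cons (d : ℕ) (h : ℕ →₀ ℕ) : ℕ →₀ ℕ :=
  Finsupp.single 0 d + Finsupp.embDomain succEmb h

@[simp] lemma cons_apply_zero (d : ℕ) (h : ℕ →₀ ℕ) : cons d h 0 = d := by
  have h0 : (Finsupp.embDomain succEmb h) 0 = 0 := by
    apply Finsupp.embDomain_notin_range
    rintro ⟨a, ha⟩
    exact Nat.succ_ne_zero a ha
  simp [cons, h0]

@[simp] lemma cons_apply_succ (d : ℕ) (h : ℕ →₀ ℕ) (j : ℕ) : cons d h (j+1) = h j := by
  have h1 : (Finsupp.embDomain succEmb h) (j+1) = h j := Finsupp.embDomain_apply_self succEmb h j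
  simp [cons, h1]

noncomputable def tail (h : ℕ →₀ ℕ) : ℕ →₀ ℕ :=
  Finsupp.comapDomain Nat.succ h (Nat.succ_injective.injOn)

@[simp] lemma tail_apply (h : ℕ →₀ ℕ) (j : ℕ) : tail h j = h (j+1) := rfl

lemma cons_tail (h : ℕ →₀ ℕ) : cons (h 0) (tail h) = h := by
  ext j
  cases j with
  | zero => simp
  | succ j => simp

lemma cons_injective (d : ℕ) : Function.Injective (cons d) := by
  intro a b hab
  ext j
  have := congrArg (fun f : ℕ →₀ ℕ => f (j+1)) hab
  simpa using this

lemma val_cons (d : ℕ) (h : ℕ →₀ ℕ) : val (cons d h) = d + 2 * val h := by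
  unfold val cons
  rw [Finsupp.sum_add_index (by simp) (by intros; ring)]
  rw [Finsupp.sum_single_index (by simp), Finsupp.sum_embDomain]
  simp only [succEmb, Function.Embedding.coeFn_mk, Nat.succ_eq_add_one]
  rw [Finsupp.mul_sum]
  simp only [pow_zero, mul_one]
  congr 1
  apply Finsupp.sum_congr
  intros j _
  ring

end HB

namespace HB

def ones (h : ℕ →₀ ℕ) : Set ℕ := {j | h j = 1}

lemma ones_finite (h : ℕ →₀ ℕ) : (ones h).Finite := by
  apply Set.Finite.subset h.finite_support
  intro j hj
  simp only [ones, Set.mem_setOf_eq] at hj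
  simp [Finsupp.mem_support_iff, hj]

lemma ones_cons_one (h : ℕ →₀ ℕ) : ones (cons 1 h) = insert 0 (Nat.succ '' ones h) := by
  ext j
  cases j with
  | zero => simp [ones]
  | succ j =>
    simp only [ones, Set.mem_setOf_eq, cons_apply_succ, Set.mem_insert_iff, Set.mem_image]
    constructor
    · intro hj; right; exact ⟨j, hj, rfl⟩
    · rintro (hj | ⟨k, hk, hkj⟩)
      · exact absurd hj (Nat.succ_ne_zero j)
      · rw [← Nat.succ_injective hkj]; exact hk

lemma ones_cons_ne (d : ℕ) (hd : d ≠ 1) (h : ℕ →₀ ℕ) :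
    ones (cons d h) = Nat.succ '' ones h := by
  ext j
  cases j with
  | zero =>
    simp only [ones, Set.mem_setOf_eq, cons_apply_zero, Set.mem_image]
    constructor
    · intro hj; exact absurd hj hd
    · rintro ⟨k, hk, hkj⟩; exact absurd hkj (Nat.succ_ne_zero k)
  | succ j =>
    simp only [ones, Set.mem_setOf_eq, cons_apply_succ, Set.mem_image]
    constructor
    · intro hj; exact ⟨j, hj, rfl⟩
    · rintro ⟨k, hk, hkj⟩; rw [← Nat.succ_injective hkj]; exact hk

lemma ncard_ones_cons_one (h : ℕ →₀ ℕ) : (ones (cons 1 h)).ncard = (ones h).ncard + 1 := by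
  rw [ones_cons_one]
  rw [Set.ncard_insert_of_notMem (by rintro ⟨k, _, hk⟩; exact Nat.succ_ne_zero k hk)
    ((ones_finite h).image _)]
  rw [Set.ncard_image_of_injective _ Nat.succ_injective]

lemma ncard_ones_cons_ne (d : ℕ) (hd : d ≠ 1) (h : ℕ →₀ ℕ) :
    (ones (cons d h)).ncard = (ones h).ncard := by
  rw [ones_cons_ne d hd, Set.ncard_image_of_injective _ Nat.succ_injective]

def S (n ℓ : ℕ) : Set (ℕ →₀ ℕ) := {h | (∀ j, h j ≤ 2) ∧ val h = n ∧ (ones h).ncard = ℓ}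

lemma term_le_val (h : ℕ →₀ ℕ) (j : ℕ) : h j * 2 ^ j ≤ val h := by
  by_cases hj : h j = 0
  · simp [hj]
  · exact Finset.single_le_sum (f := fun j => h j * 2 ^ j) (fun _ _ => Nat.zero_le _)
      (Finsupp.mem_support_iff.mpr hj)

lemma S_finite (n ℓ : ℕ) : (S n ℓ).Finite := by
  set H : ℕ →₀ ℕ := (Finset.range (n+1)).sum (fun j => Finsupp.single j 2) with hH
  apply Set.Finite.subset (Set.finite_Iic H)
  rintro h ⟨hd, hv, -⟩
  intro j
  have hHj : H j = if j ∈ Finset.range (n+1) then 2 else 0 := by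
    rw [hH, Finset.sum_apply']
    simp [Finsupp.single_apply]
  by_cases hj : j ∈ Finset.range (n+1)
  · rw [hHj, if_pos hj]; exact hd j
  · rw [hHj, if_neg hj]
    by_contra hne
    have h1 : 1 ≤ h j := by omega
    have : 2 ^ j ≤ val h := le_trans (by nlinarith [Nat.one_le_two_pow (n := j)]) (term_le_val h j)
    rw [hv] at this
    have : j < 2 ^ j := Nat.lt_two_pow_self
    simp at hj
    omega

end HB

namespace HB

lemma val_eq (h : ℕ →₀ ℕ) : val h = h 0 + 2 * val (tail h) := by
  conv_lhs => rw [← cons_tail h, val_cons]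

lemma mem_S_cons (d : ℕ) (hd : d ≤ 2) (m ℓ : ℕ) (k : ℕ →₀ ℕ) (hk : k ∈ S m ℓ) :
    cons d k ∈ S (d + 2*m) (ℓ + if d = 1 then 1 else 0) := by
  obtain ⟨hdig, hval, hones⟩ := hk
  refine ⟨?_, ?_, ?_⟩
  · intro j; cases j with
    | zero => simpa using hd
    | succ j => simpa using hdig j
  · rw [val_cons, hval]
  · by_cases h1 : d = 1
    · subst h1; rw [ncard_ones_cons_one, hones]; simp
    · rw [ncard_ones_cons_ne d h1, hones, if_neg h1]
      omega

lemma tail_mem_S (n ℓ : ℕ) (h : ℕ →₀ ℕ) (hh : h ∈ S n ℓ) :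
    tail h ∈ S ((n - h 0)/2) (ℓ - (if h 0 = 1 then 1 else 0)) ∧
      n = h 0 + 2 * ((n - h 0)/2) ∧ (h 0 = 1 → 1 ≤ ℓ) := by
  obtain ⟨hdig, hval, hones⟩ := hh
  have hv := val_eq h
  have hvt : val (tail h) = (n - h 0)/2 := by omega
  have hdt : ∀ j, tail h j ≤ 2 := fun j => hdig (j+1)
  have honest : (ones (tail h)).ncard = ℓ - (if h 0 = 1 then 1 else 0) ∧ (h 0 = 1 → 1 ≤ ℓ) := by
    by_cases h1 : h 0 = 1
    · have := ncard_ones_cons_one (tail h)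
      rw [← h1, cons_tail, hones] at this
      simp [h1]; omega
    · have := ncard_ones_cons_ne (h 0) h1 (tail h)
      rw [cons_tail, hones] at this
      simp [h1, this.symm]
  exact ⟨⟨hdt, hvt, honest.1⟩, by omega, honest.2⟩

lemma S_zero_zero : S 0 0 = {0} := by
  ext h
  simp only [S, Set.mem_setOf_eq, Set.mem_singleton_iff]
  constructor
  · rintro ⟨hd, hv, ho⟩
    ext j
    have := term_le_val h j
    rw [hv] at this
    have h2 : 0 < 2 ^ j := Nat.pow_pos (n := j) (by norm_num)
    simp only [Finsupp.coe_zero, Pi.zero_apply]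
    nlinarith
  · rintro rfl
    refine ⟨by simp, by simp [val], ?_⟩
    have : ones (0 : ℕ →₀ ℕ) = ∅ := by ext j; simp [ones]
    simp [this]

lemma S_zero_succ (ℓ : ℕ) : S 0 (ℓ+1) = ∅ := by
  ext h
  simp only [S, Set.mem_setOf_eq, Set.mem_empty_iff_false, iff_false]
  rintro ⟨hd, hv, ho⟩
  have hall : h = 0 := by
    have : h ∈ S 0 0 ∨ h ∈ S 0 (ℓ+1) := Or.inr ⟨hd, hv, ho⟩
    -- reuse argument
    ext j
    have := term_le_val h j
    rw [hv] at this
    have h2 : 0 < 2 ^ j := Nat.pow_pos (n := j) (by norm_num)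
    simp only [Finsupp.coe_zero, Pi.zero_apply]
    nlinarith
  subst hall
  have : ones (0 : ℕ →₀ ℕ) = ∅ := by ext j; simp [ones]
  rw [this] at ho
  simp at ho

lemma S_odd (m ℓ : ℕ) : S (2*m+1) (ℓ+1) = cons 1 '' S m ℓ := by
  ext h
  constructor
  · intro hh
    obtain ⟨ht, hn, -⟩ := tail_mem_S _ _ _ hh
    have h0 : h 0 = 1 := by
      have := hh.1 0
      omega
    rw [h0] at ht hn
    simp only [if_pos rfl] at ht
    have hm : (2*m+1-1)/2 = m := by omega
    rw [hm] at ht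
    exact ⟨tail h, by simpa using ht, by rw [← h0]; exact cons_tail h⟩
  · rintro ⟨k, hk, rfl⟩
    have := mem_S_cons 1 (by norm_num) m ℓ k hk
    simpa [add_comm] using this

lemma S_odd_zero (m : ℕ) : S (2*m+1) 0 = ∅ := by
  ext h
  simp only [Set.mem_empty_iff_false, iff_false]
  intro hh
  obtain ⟨-, -, h1⟩ := tail_mem_S _ _ _ hh
  have h0 : h 0 = 1 := by have := hh.1 0; have := hh.2.1; rw [val_eq h] at this; omega
  exact absurd (h1 h0) (by omega)

lemma S_even (m ℓ : ℕ) : S (2*m+2) ℓ = cons 0 '' S (m+1) ℓ ∪ cons 2 '' S m ℓ := by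
  ext h
  constructor
  · intro hh
    obtain ⟨ht, hn, -⟩ := tail_mem_S _ _ _ hh
    have h0 : h 0 = 0 ∨ h 0 = 2 := by
      have := hh.1 0
      omega
    rcases h0 with h0 | h0 <;> rw [h0] at ht hn
    · left
      have hm : (2*m+2-0)/2 = m+1 := by omega
      rw [hm] at ht
      simp only [if_neg (by norm_num : (0:ℕ) ≠ 1), Nat.sub_zero] at ht
      exact ⟨tail h, by simpa using ht, by rw [← h0]; exact cons_tail h⟩
    · right
      have hm : (2*m+2-2)/2 = m := by omega
      rw [hm] at ht
      simp only [if_neg (by norm_num : (2:ℕ) ≠ 1)] at ht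
      exact ⟨tail h, by simpa using ht, by rw [← h0]; exact cons_tail h⟩
  · rintro (⟨k, hk, rfl⟩ | ⟨k, hk, rfl⟩)
    · have := mem_S_cons 0 (by norm_num) (m+1) ℓ k hk
      simpa [show 0 + 2*(m+1) = 2*m+2 by ring] using this
    · have := mem_S_cons 2 (by norm_num) m ℓ k hk
      simpa [show 2 + 2*m = 2*m+2 by ring] using this

end HB

namespace HB

lemma main (n : ℕ) : ∀ ℓ : ℕ, (S n ℓ).ncard = (sternP (n+1)).coeff ℓ := by
  induction n using Nat.strong_induction_on with
  | _ n ih =>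
  intro ℓ
  rcases Nat.even_or_odd' n with ⟨m, rfl | rfl⟩
  · cases m with
    | zero =>
      norm_num [sternP_one]
      cases ℓ with
      | zero => rw [S_zero_zero]; simp
      | succ ℓ => rw [S_zero_succ]; simp [Polynomial.coeff_one]
    | succ m =>
      have hn : 2 * (m+1) = 2*m+2 := by ring
      rw [hn, S_even m ℓ, show 2*m+2+1 = 2*m+3 from rfl, sternP_odd]
      have hdisj : Disjoint (cons 0 '' S (m+1) ℓ) (cons 2 '' S m ℓ) := by
        rw [Set.disjoint_left]
        rintro h ⟨k, -, rfl⟩ ⟨k', -, hk'⟩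
        have := congrArg (fun f : ℕ →₀ ℕ => f 0) hk'
        simp at this
      rw [Set.ncard_union_eq hdisj (((S_finite (m+1) ℓ)).image _) ((S_finite m ℓ).image _)]
      rw [Set.ncard_image_of_injective _ (cons_injective 0),
        Set.ncard_image_of_injective _ (cons_injective 2)]
      rw [Polynomial.coeff_add, ih (m+1) (by omega) ℓ, ih m (by omega) ℓ]
      exact add_comm _ _
  · rw [show 2*m+1+1 = 2*m+2 from rfl, sternP_even]
    cases ℓ with
    | zero =>
      rw [S_odd_zero]
      simp [Polynomial.mul_coeff_zero]
    | succ ℓ =>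
      rw [S_odd m ℓ, Set.ncard_image_of_injective _ (cons_injective 1),
        Polynomial.coeff_X_mul, ih m (by omega) ℓ]

end HB

theorem hyperbinary_ones_stern_coeff (n ℓ : ℕ) :
    {h : ℕ →₀ ℕ | (∀ j, h j ≤ 2) ∧ (h.sum fun j a => a * 2 ^ j) = n ∧
        {j | h j = 1}.ncard = ℓ}.ncard
      = (sternP (n + 1)).coeff ℓ := HB.main n ℓ
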